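/- Density inequality at the averaged quantile: Let φ(x) := (1/√(2π)) e^{−x²/2} be the standard normal density and Φ its cumulative distribution function. For every t ∈ ℝ and h ∈ ℝ satisfying Φ(h) = (1/2) Φ(t − 1) + (1/2) Φ(t + 1), one has φ(h) > (1/2) φ(t − 1) + (1/2) φ(t + 1). -/

import Mathlib

open MeasureTheory

/-- The standard normal density `φ(x) = (1/√(2π)) e^{−x²/2}`. -/
noncomputable def stdNormalPDF (x : ℝ) : ℝ :=
  Real.exp (-x ^ 2 / 2) / Real.sqrt (2 * Real.pi)

/-- The standard normal cumulative distribution function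
`Φ(t) = ∫_{−∞}^t φ(u) du`. -/
noncomputable def stdNormalCDF (t : ℝ) : ℝ :=
  ∫ u in Set.Iic t, stdNormalPDF u

lemma stdNormalPDF_pos (x : ℝ) : 0 < stdNormalPDF x := by
  unfold stdNormalPDF
  positivity

lemma stdNormalPDF_continuous : Continuous stdNormalPDF := by
  unfold stdNormalPDF
  fun_prop

lemma stdNormalPDF_integrable : Integrable stdNormalPDF := by
  have h : Integrable (fun x : ℝ => Real.exp (-(1/2 : ℝ) * x ^ 2)) :=
    integrable_exp_neg_mul_sq (by norm_num)
  have := h.div_const (Real.sqrt (2 * Real.pi))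
  convert this using 2 with x
  unfold stdNormalPDF
  ring_nf

lemma stdNormalCDF_sub (x y : ℝ) (hxy : x ≤ y) :
    stdNormalCDF y - stdNormalCDF x = ∫ u in x..y, stdNormalPDF u := by
  rw [intervalIntegral.integral_of_le hxy]
  unfold stdNormalCDF
  have hdisj : Disjoint (Set.Iic x) (Set.Ioc x y) := by
    rw [Set.disjoint_left]
    rintro u hu ⟨h1, _⟩
    exact absurd hu (not_le.mpr h1)
  have hunion : Set.Iic x ∪ Set.Ioc x y = Set.Iic y := Set.Iic_union_Ioc_eq_Iic hxy
  have := setIntegral_union hdisj measurableSet_Ioc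
    (stdNormalPDF_integrable.integrableOn) (stdNormalPDF_integrable.integrableOn)
  rw [hunion] at this
  rw [this]; ring

lemma stdNormalCDF_strictMono : StrictMono stdNormalCDF := by
  intro x y hxy
  have h := stdNormalCDF_sub x y hxy.le
  have hpos : 0 < ∫ u in x..y, stdNormalPDF u :=
    intervalIntegral.intervalIntegral_pos_of_pos_on
      (stdNormalPDF_continuous.intervalIntegrable x y)
      (fun u _ => stdNormalPDF_pos u) hxy
  linarith

lemma stdNormalPDF_hasDerivAt (x : ℝ) :
    HasDerivAt stdNormalPDF (-x * stdNormalPDF x) x := by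
  have h1 : HasDerivAt (fun u : ℝ => -u ^ 2 / 2) (-x) x := by
    have : HasDerivAt (fun u : ℝ => -u ^ 2 / 2) (-(2 * x ^ 1) / 2) x := by
      exact (((hasDerivAt_pow 2 x).neg).div_const 2)
    convert this using 1
    simp; ring
  have h2 : HasDerivAt (fun u : ℝ => Real.exp (-u ^ 2 / 2)) (Real.exp (-x ^ 2 / 2) * (-x)) x :=
    (Real.hasDerivAt_exp _).comp x h1
  have h3 := h2.div_const (Real.sqrt (2 * Real.pi))
  unfold stdNormalPDF
  exact h3.congr_deriv (by ring)

/-- Density inequality at the averaged quantile: if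
`Φ(h) = (1/2)Φ(t−1) + (1/2)Φ(t+1)`, then `φ(h) > (1/2)φ(t−1) + (1/2)φ(t+1)`. -/
theorem density_inequality_at_averaged_quantile
    (t h : ℝ)
    (hh : stdNormalCDF h = (1 / 2) * stdNormalCDF (t - 1) + (1 / 2) * stdNormalCDF (t + 1)) :
    stdNormalPDF h > (1 / 2) * stdNormalPDF (t - 1) + (1 / 2) * stdNormalPDF (t + 1) := by
  set a := t - 1 with ha
  set b := t + 1 with hb
  have hab : a < b := by simp [ha, hb]; linarith
  have hΦab : stdNormalCDF a < stdNormalCDF b := stdNormalCDF_strictMono hab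
  have hah : a < h := by
    apply stdNormalCDF_strictMono.lt_iff_lt.mp; rw [hh]; linarith
  have hhb : h < b := by
    apply stdNormalCDF_strictMono.lt_iff_lt.mp; rw [hh]; linarith
  -- equal masses
  have hm1 : stdNormalCDF h - stdNormalCDF a = ∫ u in a..h, stdNormalPDF u :=
    stdNormalCDF_sub a h hah.le
  have hm2 : stdNormalCDF b - stdNormalCDF h = ∫ u in h..b, stdNormalPDF u :=
    stdNormalCDF_sub h b hhb.le
  have hmeq : (∫ u in a..h, stdNormalPDF u) = ∫ u in h..b, stdNormalPDF u := by
    rw [← hm1, ← hm2]; linarith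
  -- FTC
  have hftc1 : stdNormalPDF h - stdNormalPDF a = ∫ u in a..h, -u * stdNormalPDF u := by
    rw [intervalIntegral.integral_eq_sub_of_hasDerivAt
      (fun u _ => stdNormalPDF_hasDerivAt u)
      ((continuous_id.neg.mul stdNormalPDF_continuous).intervalIntegrable a h)]
  have hftc2 : stdNormalPDF b - stdNormalPDF h = ∫ u in h..b, -u * stdNormalPDF u := by
    rw [intervalIntegral.integral_eq_sub_of_hasDerivAt
      (fun u _ => stdNormalPDF_hasDerivAt u)
      ((continuous_id.neg.mul stdNormalPDF_continuous).intervalIntegrable h b)]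
  have hP1 : 0 < ∫ u in a..h, (h - u) * stdNormalPDF u :=
    intervalIntegral.intervalIntegral_pos_of_pos_on
      (((continuous_const.sub continuous_id).mul stdNormalPDF_continuous).intervalIntegrable a h)
      (fun u hu => mul_pos (by linarith [hu.2]) (stdNormalPDF_pos u)) hah
  have hP2 : 0 < ∫ u in h..b, (u - h) * stdNormalPDF u :=
    intervalIntegral.intervalIntegral_pos_of_pos_on
      (((continuous_id.sub continuous_const).mul stdNormalPDF_continuous).intervalIntegrable h b)
      (fun u hu => mul_pos (by linarith [hu.1]) (stdNormalPDF_pos u)) hhb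
  have hexp1 : (∫ u in a..h, (h - u) * stdNormalPDF u)
      = h * (∫ u in a..h, stdNormalPDF u) + ∫ u in a..h, -u * stdNormalPDF u := by
    have he : (fun u => (h - u) * stdNormalPDF u)
        = fun u => h * stdNormalPDF u + -u * stdNormalPDF u := by ext u; ring
    rw [he, intervalIntegral.integral_add (f := fun u => h * stdNormalPDF u) (g := fun u => -u * stdNormalPDF u)
      ((continuous_const.mul stdNormalPDF_continuous).intervalIntegrable a h)
      ((continuous_neg.mul stdNormalPDF_continuous).intervalIntegrable a h),
      intervalIntegral.integral_const_mul]
  have hexp2 : (∫ u in h..b, (u - h) * stdNormalPDF u)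
      = (-1) * (∫ u in h..b, -u * stdNormalPDF u) + (-h) * (∫ u in h..b, stdNormalPDF u) := by
    have he : (fun u => (u - h) * stdNormalPDF u)
        = fun u => (-1) * (-u * stdNormalPDF u) + (-h) * stdNormalPDF u := by ext u; ring
    rw [he, intervalIntegral.integral_add (f := fun u => (-1) * (-u * stdNormalPDF u)) (g := fun u => (-h) * stdNormalPDF u)
      ((continuous_const.mul (continuous_neg.mul stdNormalPDF_continuous)).intervalIntegrable h b)
      ((continuous_const.mul stdNormalPDF_continuous).intervalIntegrable h b),
      intervalIntegral.integral_const_mul, intervalIntegral.integral_const_mul]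
  rw [hmeq] at hexp1
  linarith
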